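/- For α ∈ (0, 1) let γ_α ∈ (0, ∞) be the unique constant such that the density g_α(x) = γ_α exp(−γ_α α x − γ_α(1 − α) x²/2) on [0, ∞) has unit mean (∫_0^∞ x g_α(x) dx = 1). Then γ_α ≤ 1 for all α ∈ (0, 1). Moreover lim_{α → 1⁻} γ_α = 1 and lim_{α → 0⁺} γ_α = 2/π. -/

import Mathlib

open Set Filter MeasureTheory
open Real Topology


lemma myint_exp {b : ℝ} (hb : 0 < b) : ∫ x in Ioi (0:ℝ), Real.exp (-(b*x)) = 1/b := by
  have h := Real.integral_rpow_mul_exp_neg_mul_Ioi (a := 1) (r := b) one_pos hb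
  simp only [sub_self, Real.rpow_zero, one_mul, Real.rpow_one, Real.Gamma_one, mul_one] at h
  exact h

lemma myint_x_exp {b : ℝ} (hb : 0 < b) : ∫ x in Ioi (0:ℝ), x * Real.exp (-(b*x)) = 1/b^2 := by
  have h := Real.integral_rpow_mul_exp_neg_mul_Ioi (a := 2) (r := b) two_pos hb
  simp_rw [show ((2:ℝ)-1) = (1:ℝ) by norm_num, Real.rpow_one] at h
  rw [show ((1:ℝ)/b) ^ (2:ℝ) = (1/b)^(2:ℕ) by rw [← Real.rpow_natCast]; norm_num,
    Real.Gamma_two, mul_one] at h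
  rw [h]; ring

lemma myint_x3_exp {b : ℝ} (hb : 0 < b) : ∫ x in Ioi (0:ℝ), x^3 * Real.exp (-(b*x)) = 6/b^4 := by
  have h := Real.integral_rpow_mul_exp_neg_mul_Ioi (a := 4) (r := b) (by norm_num) hb
  simp_rw [show ((4:ℝ)-1) = ((3:ℕ):ℝ) by norm_num, Real.rpow_natCast] at h
  rw [show ((1:ℝ)/b) ^ (4:ℝ) = (1/b)^(4:ℕ) by rw [← Real.rpow_natCast]; norm_num] at h
  have h4 : Real.Gamma 4 = 6 := by
    rw [show (4:ℝ) = ((3:ℕ):ℝ)+1 by norm_num, Real.Gamma_nat_eq_factorial]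
    norm_num [Nat.factorial]
  rw [h4] at h
  rw [h]; ring

lemma myintOn_x_exp {b : ℝ} (hb : 0 < b) : IntegrableOn (fun x => x * Real.exp (-(b*x))) (Ioi (0:ℝ)) := by
  have h := integrableOn_rpow_mul_exp_neg_mul_rpow (p := 1) (s := 1) (b := b) (by norm_num) one_pos hb
  refine h.congr_fun (fun x hx => ?_) measurableSet_Ioi
  simp [Real.rpow_one, neg_mul]

lemma myintOn_x3_exp {b : ℝ} (hb : 0 < b) : IntegrableOn (fun x => x^3 * Real.exp (-(b*x))) (Ioi (0:ℝ)) := by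
  have h := integrableOn_rpow_mul_exp_neg_mul_rpow (p := 1) (s := 3) (b := b) (by norm_num) one_pos hb
  refine h.congr_fun (fun x hx => ?_) measurableSet_Ioi
  beta_reduce
  rw [Real.rpow_one, ← Real.rpow_natCast x 3, neg_mul]
  norm_num

lemma myint_x_gauss {b : ℝ} (hb : 0 < b) : ∫ x in Ioi (0:ℝ), x * Real.exp (-b*x^2) = (2*b)⁻¹ := by
  have A : ∀ x ∈ Ici (0:ℝ), HasDerivAt (fun y : ℝ => -(2*b)⁻¹ * Real.exp (-b*y^2))
      (x * Real.exp (-b*x^2)) x := by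
    intro x _
    have := ((hasDerivAt_pow 2 x).const_mul (-b)).exp.const_mul (-(2*b)⁻¹)
    refine this.congr_deriv ?_
    field_simp
    ring
  have B : Tendsto (fun y : ℝ => -(2*b)⁻¹ * Real.exp (-b*y^2)) atTop (𝓝 0) := by
    have : Tendsto (fun y : ℝ => Real.exp (-b*y^2)) atTop (𝓝 0) :=
      Real.tendsto_exp_atBot.comp
        ((tendsto_pow_atTop two_ne_zero).const_mul_atTop_of_neg (neg_lt_zero.2 hb))
    simpa using this.const_mul (-(2*b)⁻¹)
  have := integral_Ioi_of_hasDerivAt_of_tendsto' A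
    ((integrable_mul_exp_neg_mul_sq hb).integrableOn) B
  simpa using this

lemma myintOn_exp {b : ℝ} (hb : 0 < b) : IntegrableOn (fun x => Real.exp (-(b*x))) (Ioi (0:ℝ)) :=
  (exp_neg_integrableOn_Ioi 0 hb).congr_fun (fun x _ => by simp only [neg_mul]) measurableSet_Ioi

set_option maxHeartbeats 1000000 in
lemma crux {g α : ℝ} (hg : 0 < g) (ha1 : 0 < α) (ha2 : α < 1)
    (hN : (∫ x in Ioi (0:ℝ), g * Real.exp (-(g*α*x) - g*(1-α)*x^2/2)) = 1)
    (hM : (∫ x in Ioi (0:ℝ), x * (g * Real.exp (-(g*α*x) - g*(1-α)*x^2/2))) = 1) :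
    g ≤ 1 ∧ 2/π ≤ g ∧ π*g/2 ≤ (1+g*α)^2 ∧ g*α^2 - 3*(1-α) ≤ g^2*α^4 := by
  have h1α : (0:ℝ) < 1 - α := by linarith
  have hg2 : (0:ℝ) < g/2 := by positivity
  have hga : (0:ℝ) < g*α := by positivity
  -- convexity bound
  have hc : ∀ x : ℝ, Real.exp (-(g*α*x) - g*(1-α)*x^2/2)
      ≤ α * Real.exp (-(g*x)) + (1-α) * Real.exp (-(g/2)*x^2) := by
    intro x
    have h := convexOn_exp.2 (mem_univ (-(g*x))) (mem_univ (-(g/2)*x^2))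
      ha1.le h1α.le (by ring)
    simp only [smul_eq_mul] at h
    calc Real.exp (-(g*α*x) - g*(1-α)*x^2/2)
        = Real.exp (α * -(g*x) + (1-α) * (-(g/2)*x^2)) := by ring_nf
      _ ≤ _ := h
  -- Part 1 : g ≤ 1
  have part1 : g ≤ 1 := by
    have hmono : (∫ x in Ioi (0:ℝ), x * (g * Real.exp (-(g*α*x) - g*(1-α)*x^2/2)))
        ≤ ∫ x in Ioi (0:ℝ),
        ((α*g) * (x * Real.exp (-(g*x))) + ((1-α)*g) * (x * Real.exp (-(g/2)*x^2))) := by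
      refine integral_mono_of_nonneg ?_ ?_ ?_
      · refine (ae_restrict_mem measurableSet_Ioi).mono fun x hx => ?_
        have hx0 : (0:ℝ) < x := hx
        dsimp only
        positivity
      · exact (((myintOn_x_exp hg).const_mul _).add
          (((integrable_mul_exp_neg_mul_sq hg2).integrableOn).const_mul _))
      · refine (ae_restrict_mem measurableSet_Ioi).mono fun x hx => ?_
        have hx0 : (0:ℝ) ≤ x := le_of_lt hx
        have h := mul_le_mul_of_nonneg_left (hc x) (by positivity : (0:ℝ) ≤ x * g)
        dsimp only
        nlinarith [h]
    rw [hM] at hmono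
    rw [integral_add ((myintOn_x_exp hg).const_mul _)
        (((integrable_mul_exp_neg_mul_sq hg2).integrableOn).const_mul _),
      integral_const_mul, integral_const_mul, myint_x_exp hg, myint_x_gauss hg2] at hmono
    have key : (1:ℝ) ≤ α / g + (1 - α) := by
      have e : (α*g) * (1/g^2) + ((1-α)*g) * (2*(g/2))⁻¹ = α/g + (1-α) := by
        field_simp
      linarith [e ▸ hmono]
    have : α ≤ α / g := by linarith
    rw [le_div_iff₀ hg] at this
    nlinarith
  -- Part 2 : 1 ≤ T  where T = g * (√(π/(g/2))/2), and T² = πg/2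
  set T : ℝ := g * (Real.sqrt (π/(g/2))/2) with hT
  have hT2 : T^2 = π*g/2 := by
    rw [hT, show (g * (Real.sqrt (π/(g/2))/2))^2 = g^2 * (Real.sqrt (π/(g/2)))^2 / 4 by ring,
      Real.sq_sqrt (by positivity)]
    field_simp
    ring
  have hTnn : 0 ≤ T := by positivity
  clear_value T
  have part2 : 2/π ≤ g := by
    have hmono : (∫ x in Ioi (0:ℝ), g * Real.exp (-(g*α*x) - g*(1-α)*x^2/2))
        ≤ ∫ x in Ioi (0:ℝ),
        ((α*g) * Real.exp (-(g*x)) + ((1-α)*g) * Real.exp (-(g/2)*x^2)) := by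
      refine integral_mono_of_nonneg ?_ ?_ ?_
      · exact (ae_restrict_mem measurableSet_Ioi).mono fun x hx => by dsimp only; positivity
      · exact (((myintOn_exp hg).const_mul _).add
          (((integrable_exp_neg_mul_sq hg2).integrableOn).const_mul _))
      · refine (ae_restrict_mem measurableSet_Ioi).mono fun x hx => ?_
        have h := mul_le_mul_of_nonneg_left (hc x) hg.le
        dsimp only
        nlinarith [h]
    rw [hN] at hmono
    rw [integral_add ((myintOn_exp hg).const_mul _)
        (((integrable_exp_neg_mul_sq hg2).integrableOn).const_mul _),
      integral_const_mul, integral_const_mul, myint_exp hg, integral_gaussian_Ioi] at hmono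
    have key : 1 ≤ α + (1-α) * T := by
      have e : (α*g) * (1/g) + ((1-α)*g) * (Real.sqrt (π/(g/2))/2) = α + (1-α)*T := by
        rw [hT]; field_simp
      linarith [e ▸ hmono]
    have hT1 : 1 ≤ T := by nlinarith
    have : 1 ≤ π*g/2 := by nlinarith
    rw [div_le_iff₀ pi_pos]
    nlinarith
  -- integrability of the profile and its mean integrand
  have hcontF : Continuous (fun x : ℝ => g * Real.exp (-(g*α*x) - g*(1-α)*x^2/2)) := by
    fun_prop
  have hFint : IntegrableOn (fun x : ℝ => g * Real.exp (-(g*α*x) - g*(1-α)*x^2/2)) (Ioi 0) := by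
    refine Integrable.mono'
      (((integrable_exp_neg_mul_sq (show (0:ℝ) < g*(1-α)/2 by positivity)).const_mul
        g).integrableOn) hcontF.aestronglyMeasurable.restrict ?_
    refine (ae_restrict_mem measurableSet_Ioi).mono fun x hx => ?_
    have hx0 : (0:ℝ) ≤ x := le_of_lt hx
    rw [Real.norm_eq_abs, abs_of_nonneg (by positivity)]
    refine mul_le_mul_of_nonneg_left (Real.exp_le_exp.2 ?_) hg.le
    nlinarith [mul_nonneg (mul_nonneg hg.le ha1.le) hx0]
  have hxFint : IntegrableOn (fun x : ℝ => x * (g * Real.exp (-(g*α*x) - g*(1-α)*x^2/2)))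
      (Ioi 0) := by
    refine Integrable.mono' ((myintOn_x_exp hga).const_mul g)
      (continuous_id.mul hcontF).aestronglyMeasurable.restrict ?_
    refine (ae_restrict_mem measurableSet_Ioi).mono fun x hx => ?_
    have hx0 : (0:ℝ) ≤ x := le_of_lt hx
    rw [Real.norm_eq_abs, abs_of_nonneg (by positivity)]
    calc x * (g * Real.exp (-(g*α*x) - g*(1-α)*x^2/2))
        ≤ x * (g * Real.exp (-(g*α*x))) := by
          refine mul_le_mul_of_nonneg_left
            (mul_le_mul_of_nonneg_left (Real.exp_le_exp.2 (by nlinarith [mul_nonneg (mul_nonneg hg.le h1α.le) (sq_nonneg x)])) hg.le) hx0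
      _ = g * (x * Real.exp (-(g*α*x))) := by ring
  -- Part 3 : πg/2 ≤ (1 + gα)²
  have part3 : π*g/2 ≤ (1+g*α)^2 := by
    have hmono : (∫ x in Ioi (0:ℝ),
        (g * Real.exp (-(g/2)*x^2) - (g^2*α) * (x * Real.exp (-(g/2)*x^2))))
        ≤ ∫ x in Ioi (0:ℝ), g * Real.exp (-(g*α*x) - g*(1-α)*x^2/2) := by
      refine integral_mono_ae
        ((((integrable_exp_neg_mul_sq hg2).integrableOn).const_mul _).sub
          (((integrable_mul_exp_neg_mul_sq hg2).integrableOn).const_mul _)) hFint ?_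
      refine (ae_restrict_mem measurableSet_Ioi).mono fun x hx => ?_
      dsimp only
      rw [show -(g*α*x) - g*(1-α)*x^2/2 = (-(g*α*x)) + (-(g*(1-α)*x^2/2)) by ring,
        Real.exp_add]
      have h1 : 1 - g*α*x ≤ Real.exp (-(g*α*x)) := by
        have := Real.add_one_le_exp (-(g*α*x)); linarith
      have h2 : Real.exp (-(g/2)*x^2) ≤ Real.exp (-(g*(1-α)*x^2/2)) := by
        apply Real.exp_le_exp.2; nlinarith [sq_nonneg x]
      have h3 := mul_le_mul_of_nonneg_right h1 (Real.exp_pos (-(g/2)*x^2)).le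
      have h4 := mul_le_mul_of_nonneg_left h2 (Real.exp_pos (-(g*α*x))).le
      nlinarith [mul_le_mul_of_nonneg_left (h3.trans h4) hg.le]
    rw [hN] at hmono
    rw [integral_sub (((integrable_exp_neg_mul_sq hg2).integrableOn).const_mul _)
        (((integrable_mul_exp_neg_mul_sq hg2).integrableOn).const_mul _),
      integral_const_mul, integral_const_mul, integral_gaussian_Ioi,
      myint_x_gauss hg2] at hmono
    have key : T - g*α ≤ 1 := by
      have e : g * (Real.sqrt (π/(g/2))/2) - (g^2*α) * (2*(g/2))⁻¹ = T - g*α := by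
        rw [hT]; field_simp
      linarith [e ▸ hmono]
    have hT' : T ≤ 1 + g*α := by linarith
    calc π*g/2 = T^2 := hT2.symm
      _ ≤ (1+g*α)^2 := pow_le_pow_left₀ hTnn hT' 2
  -- Part 4 : gα² − 3(1−α) ≤ g²α⁴
  have part4 : g*α^2 - 3*(1-α) ≤ g^2*α^4 := by
    have hmono : (∫ x in Ioi (0:ℝ),
        (g * (x * Real.exp (-(g*α*x))) - (g^2*(1-α)/2) * (x^3 * Real.exp (-(g*α*x)))))
        ≤ ∫ x in Ioi (0:ℝ), x * (g * Real.exp (-(g*α*x) - g*(1-α)*x^2/2)) := by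
      refine integral_mono_ae
        (((myintOn_x_exp hga).const_mul _).sub ((myintOn_x3_exp hga).const_mul _))
        hxFint ?_
      refine (ae_restrict_mem measurableSet_Ioi).mono fun x hx => ?_
      have hx0 : (0:ℝ) ≤ x := le_of_lt hx
      dsimp only
      rw [show -(g*α*x) - g*(1-α)*x^2/2 = (-(g*α*x)) + (-(g*(1-α)*x^2/2)) by ring,
        Real.exp_add]
      have h1 : 1 - g*(1-α)*x^2/2 ≤ Real.exp (-(g*(1-α)*x^2/2)) := by
        have := Real.add_one_le_exp (-(g*(1-α)*x^2/2)); linarith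
      have h5 := mul_le_mul_of_nonneg_left h1
        (by positivity : (0:ℝ) ≤ x * g * Real.exp (-(g*α*x)))
      nlinarith [h5]
    rw [hM] at hmono
    rw [integral_sub ((myintOn_x_exp hga).const_mul _) ((myintOn_x3_exp hga).const_mul _),
      integral_const_mul, integral_const_mul, myint_x_exp hga, myint_x3_exp hga] at hmono
    have e : g * (1/(g*α)^2) - (g^2*(1-α)/2) * (6/(g*α)^4)
        = (g*α^2 - 3*(1-α))/(g^2*α^4) := by
      field_simp
      ring
    rw [e, div_le_one (by positivity)] at hmono
    exact hmono
  exact ⟨part1, part2, part3, part4⟩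

/-- Properties of the normalisation constant `γ_α` of the mean-one self-similar profile
`g_α(x) = γ_α exp(−γ_α α x − γ_α (1 − α) x²/2)` on `(0, ∞)`: `γ_α ≤ 1` for all
`α ∈ (0, 1)`, `γ_α → 1` as `α → 1⁻`, and `γ_α → 2/π` as `α → 0⁺`. -/
theorem gamma_alpha_bounds_and_limits (γ : ℝ → ℝ)
    (hpos : ∀ α ∈ Set.Ioo (0 : ℝ) 1, 0 < γ α)
    (hnorm : ∀ α ∈ Set.Ioo (0 : ℝ) 1,
      (∫ x in Set.Ioi (0 : ℝ),
        γ α * Real.exp (-(γ α * α * x) - γ α * (1 - α) * x ^ 2 / 2)) = 1)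
    (hmean : ∀ α ∈ Set.Ioo (0 : ℝ) 1,
      (∫ x in Set.Ioi (0 : ℝ),
        x * (γ α * Real.exp (-(γ α * α * x) - γ α * (1 - α) * x ^ 2 / 2))) = 1) :
    (∀ α ∈ Set.Ioo (0 : ℝ) 1, γ α ≤ 1) ∧
    Filter.Tendsto γ (nhdsWithin 1 (Set.Ioo (0 : ℝ) 1)) (nhds 1) ∧
    Filter.Tendsto γ (nhdsWithin 0 (Set.Ioo (0 : ℝ) 1)) (nhds (2 / Real.pi)) := by
  have key : ∀ α ∈ Set.Ioo (0:ℝ) 1, γ α ≤ 1 ∧ 2/π ≤ γ α ∧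
      π*(γ α)/2 ≤ (1+(γ α)*α)^2 ∧ (γ α)*α^2 - 3*(1-α) ≤ (γ α)^2*α^4 :=
    fun α hα => crux (hpos α hα) hα.1 hα.2 (hnorm α hα) (hmean α hα)
  refine ⟨fun α hα => (key α hα).1, ?_, ?_⟩
  · -- limit at 1
    have hlow : ∀ α ∈ Set.Ioo (0:ℝ) 1, α^2/(α^4 + 3*π^2/4*(1-α)) ≤ γ α := by
      intro α hα
      obtain ⟨h1, h2, h3, h4⟩ := key α hα
      have hg : 0 < γ α := hpos α hα
      have ha1 : (0:ℝ) < α := hα.1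
      have ha2 : α < 1 := hα.2
      have h1a : (0:ℝ) ≤ 1 - α := by linarith
      have hD : (0:ℝ) < α^4 + 3*π^2/4*(1-α) := by
        have h9 := mul_nonneg (by positivity : (0:ℝ) ≤ 3*π^2/4) h1a
        have h10 := pow_pos ha1 4
        linarith
      rw [div_le_iff₀ hD]
      have hgp : 2 ≤ γ α * π := (div_le_iff₀ pi_pos).1 h2
      have hsq : 4 ≤ (γ α * π)^2 := by nlinarith
      have h8 : 0 ≤ (1-α) * ((γ α * π)^2 - 4) := mul_nonneg h1a (by linarith)
      have h5 : 3*(1-α) ≤ (3*π^2/4)*(1-α)*(γ α)^2 := by nlinarith [h8]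
      have h6 : γ α * α^2 ≤ γ α * (γ α * (α^4 + 3*π^2/4*(1-α))) := by nlinarith
      have h7 := le_of_mul_le_mul_left h6 hg
      linarith
    have hL : Tendsto (fun α : ℝ => α^2/(α^4 + 3*π^2/4*(1-α)))
        (nhdsWithin 1 (Set.Ioo (0:ℝ) 1)) (nhds 1) := by
      have hc : ContinuousAt (fun α : ℝ => α^2/(α^4 + 3*π^2/4*(1-α))) 1 := by
        refine ContinuousAt.div (by fun_prop) (by fun_prop) (by norm_num)
      have h := hc.tendsto.mono_left (nhdsWithin_le_nhds (s := Set.Ioo (0:ℝ) 1))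
      rw [show (1:ℝ)^2/((1:ℝ)^4 + 3*π^2/4*(1-(1:ℝ))) = 1 by norm_num] at h
      exact h
    refine tendsto_of_tendsto_of_tendsto_of_le_of_le' hL tendsto_const_nhds
      (eventually_nhdsWithin_of_forall hlow)
      (eventually_nhdsWithin_of_forall fun α hα => (key α hα).1)
  · -- limit at 0
    have hup : ∀ α ∈ Set.Ioo (0:ℝ) 1, γ α ≤ 2*(1+α)^2/π := by
      intro α hα
      obtain ⟨h1, h2, h3, h4⟩ := key α hα
      have hg : 0 < γ α := hpos α hα
      have ha1 : (0:ℝ) < α := hα.1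
      have hga : γ α * α ≤ α := by nlinarith [mul_le_mul_of_nonneg_right h1 ha1.le]
      have h5 : (1+(γ α)*α)^2 ≤ (1+α)^2 := by
        refine pow_le_pow_left₀ (by positivity) (by linarith) 2
      rw [le_div_iff₀ pi_pos]
      linarith
    have hU : Tendsto (fun α : ℝ => 2*(1+α)^2/π)
        (nhdsWithin 0 (Set.Ioo (0:ℝ) 1)) (nhds (2/π)) := by
      have hc : ContinuousAt (fun α : ℝ => 2*(1+α)^2/π) 0 := by
        refine ContinuousAt.div (by fun_prop) (by fun_prop) pi_ne_zero
      have h := hc.tendsto.mono_left (nhdsWithin_le_nhds (s := Set.Ioo (0:ℝ) 1))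
      rw [show 2*(1+(0:ℝ))^2/π = 2/π by norm_num] at h
      exact h
    refine tendsto_of_tendsto_of_tendsto_of_le_of_le' tendsto_const_nhds hU
      (eventually_nhdsWithin_of_forall fun α hα => (key α hα).2.1)
      (eventually_nhdsWithin_of_forall hup)
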